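/- (Strict log-concavity of the Poisson–binomial distribution) Let n ≥ 2 and p = (p_1,…,p_n) with 0 < p_i < 1 for all i. Then for every k with 1 ≤ k ≤ n−1, b(k−1,p)·b(k+1,p) < b(k,p)². -/

import Mathlib

open Finset

section PB

variable {ι : Type*} [DecidableEq ι]

/-- Poisson–binomial over a general finite index set. -/
noncomputable def pb (s : Finset ι) (p : ι → ℝ) (k : ℤ) : ℝ :=
  ∑ A ∈ s.powerset.filter (fun A => (A.card : ℤ) = k),
    (∏ i ∈ A, p i) * ∏ j ∈ s \ A, (1 - p j)

lemma pb_empty (p : ι → ℝ) (k : ℤ) : pb (∅ : Finset ι) p k = if k = 0 then 1 else 0 := by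
  unfold pb
  rcases eq_or_ne k 0 with h | h <;> simp [h, Finset.filter_singleton]
  rw [if_neg (by omega)]; simp

lemma pb_zero_of_neg (s : Finset ι) (p : ι → ℝ) {k : ℤ} (hk : k < 0) : pb s p k = 0 := by
  unfold pb
  apply Finset.sum_eq_zero
  intro A hA
  simp only [Finset.mem_filter] at hA
  omega

lemma pb_zero_of_gt (s : Finset ι) (p : ι → ℝ) {k : ℤ} (hk : (s.card : ℤ) < k) :
    pb s p k = 0 := by
  unfold pb
  apply Finset.sum_eq_zero
  intro A hA
  simp only [Finset.mem_filter, Finset.mem_powerset] at hA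
  have := Finset.card_le_card hA.1
  omega

lemma pb_insert {a : ι} {s : Finset ι} (ha : a ∉ s) (p : ι → ℝ) (k : ℤ) :
    pb (insert a s) p k = (1 - p a) * pb s p k + p a * pb s p (k - 1) := by
  unfold pb
  rw [Finset.powerset_insert, Finset.filter_union, Finset.sum_union]
  · congr 1
    · -- sets not containing a
      rw [Finset.mul_sum]
      apply Finset.sum_congr rfl
      intro A hA
      simp only [Finset.mem_filter, Finset.mem_powerset] at hA
      have haA : a ∉ A := fun h => ha (hA.1 h)
      have h1 : insert a s \ A = insert a (s \ A) := by
        ext x; simp only [Finset.mem_sdiff, Finset.mem_insert]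
        constructor
        · rintro ⟨h2 | h2, h3⟩
          · exact Or.inl h2
          · exact Or.inr ⟨h2, h3⟩
        · rintro (rfl | ⟨h2, h3⟩)
          · exact ⟨Or.inl rfl, haA⟩
          · exact ⟨Or.inr h2, h3⟩
      rw [h1, Finset.prod_insert (by simp [ha])]
      ring
    · -- sets containing a
      rw [Finset.filter_image, Finset.sum_image]
      · rw [Finset.mul_sum]
        apply Finset.sum_congr
        · apply Finset.filter_congr
          intro A hA
          simp only [Finset.mem_powerset] at hA
          have haA : a ∉ A := fun h => ha (hA h)
          rw [Finset.card_insert_of_notMem haA]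
          push_cast
          constructor <;> intro h <;> [omega; omega]
        · intro A hA
          simp only [Finset.mem_filter, Finset.mem_powerset] at hA
          have haA : a ∉ A := fun h => ha (hA.1 h)
          have h1 : insert a s \ insert a A = s \ A := by
            ext x; simp only [Finset.mem_sdiff, Finset.mem_insert, not_or]
            constructor
            · rintro ⟨h2 | h2, h3, h4⟩
              · exact absurd h2 h3
              · exact ⟨h2, h4⟩
            · rintro ⟨h2, h3⟩
              exact ⟨Or.inr h2, fun h => ha (h ▸ h2), h3⟩
          rw [Finset.prod_insert haA, h1]
          ring
      · intro A hA B hB hAB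
        simp only [Finset.mem_coe, Finset.mem_filter, Finset.mem_powerset] at hA hB
        have key : ∀ C : Finset ι, C ⊆ s → (insert a C).erase a = C := fun C hC =>
          Finset.erase_insert (fun h => ha (hC h))
        rw [← key A hA.1, ← key B hB.1, hAB]
  · -- disjointness
    rw [Finset.disjoint_left]
    intro A hA hA2
    simp only [Finset.mem_filter, Finset.mem_powerset, Finset.mem_image] at hA hA2
    obtain ⟨B, hB, rfl⟩ := hA2.1
    exact ha (hA.1 (Finset.mem_insert_self a B))

lemma pb_nonneg (s : Finset ι) (p : ι → ℝ) (hp : ∀ i ∈ s, 0 < p i ∧ p i < 1) (k : ℤ) :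
    0 ≤ pb s p k := by
  apply Finset.sum_nonneg
  intro A hA
  simp only [Finset.mem_filter, Finset.mem_powerset] at hA
  apply mul_nonneg
  · exact Finset.prod_nonneg fun i hi => (hp i (hA.1 hi)).1.le
  · exact Finset.prod_nonneg fun j hj => by
      have := hp j (Finset.sdiff_subset hj); linarith [this.2]

lemma pb_pos (s : Finset ι) (p : ι → ℝ) (hp : ∀ i ∈ s, 0 < p i ∧ p i < 1) {k : ℤ}
    (hk0 : 0 ≤ k) (hks : k ≤ s.card) : 0 < pb s p k := by
  obtain ⟨A, hAs, hAcard⟩ := Finset.exists_subset_card_eq (s := s) (n := k.toNat) (by omega)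
  apply Finset.sum_pos'
  · intro B hB
    simp only [Finset.mem_filter, Finset.mem_powerset] at hB
    apply mul_nonneg
    · exact Finset.prod_nonneg fun i hi => (hp i (hB.1 hi)).1.le
    · exact Finset.prod_nonneg fun j hj => by
        have := hp j (Finset.sdiff_subset hj); linarith [this.2]
  · refine ⟨A, ?_, ?_⟩
    · simp only [Finset.mem_filter, Finset.mem_powerset]
      exact ⟨hAs, by omega⟩
    · apply mul_pos
      · exact Finset.prod_pos fun i hi => (hp i (hAs hi)).1
      · exact Finset.prod_pos fun j hj => by
          have := hp j (Finset.sdiff_subset hj); linarith [this.2]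

/-- Four-term inequality derived from weak log-concavity. -/
lemma pb_four (s : Finset ι) (p : ι → ℝ) (hp : ∀ i ∈ s, 0 < p i ∧ p i < 1)
    (hweak : ∀ k : ℤ, pb s p (k - 1) * pb s p (k + 1) ≤ pb s p k ^ 2) (k : ℤ) :
    pb s p (k - 2) * pb s p (k + 1) ≤ pb s p (k - 1) * pb s p k := by
  rcases lt_or_ge (k - 1) 0 with h | h
  · rw [pb_zero_of_neg s p (by omega : k - 2 < 0)]
    have := pb_nonneg s p hp (k - 1)
    have := pb_nonneg s p hp k
    nlinarith
  rcases lt_or_ge (s.card : ℤ) k with h2 | h2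
  · rw [pb_zero_of_gt s p (by omega : (s.card : ℤ) < k + 1)]
    have := pb_nonneg s p hp (k - 1)
    have := pb_nonneg s p hp k
    nlinarith
  · have hb : 0 < pb s p (k - 1) := pb_pos s p hp (by omega) (by omega)
    have hc : 0 < pb s p k := pb_pos s p hp (by omega) (by omega)
    have h1 := hweak (k - 1)
    have h2' := hweak k
    rw [show k - 1 - 1 = k - 2 by ring, show k - 1 + 1 = k by ring] at h1
    have ha : 0 ≤ pb s p (k - 2) := pb_nonneg s p hp _
    have hd : 0 ≤ pb s p (k + 1) := pb_nonneg s p hp _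
    nlinarith [mul_le_mul h1 h2' (by positivity) (by positivity)]

/-- Weak log-concavity of the Poisson–binomial, for all integers `k`. -/
lemma pb_weak (p : ι → ℝ) (s : Finset ι) (hp : ∀ i ∈ s, 0 < p i ∧ p i < 1) :
    ∀ k : ℤ, pb s p (k - 1) * pb s p (k + 1) ≤ pb s p k ^ 2 := by
  induction s using Finset.induction_on with
  | empty =>
    intro k
    simp only [pb_empty]
    split_ifs <;> first | omega | norm_num
  | insert a t ha IH =>
    have hpt : ∀ i ∈ t, 0 < p i ∧ p i < 1 := fun i hi => hp i (Finset.mem_insert_of_mem hi)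
    have IH' := IH hpt
    intro k
    have e1 := pb_insert ha p (k - 1)
    have e2 := pb_insert ha p k
    have e3 := pb_insert ha p (k + 1)
    rw [show k - 1 - 1 = k - 2 by ring] at e1
    rw [show k + 1 - 1 = k by ring] at e3
    rw [e1, e2, e3]
    have hq : (0:ℝ) ≤ 1 - p a := by have := hp a (Finset.mem_insert_self a t); linarith [this.2]
    have hP : (0:ℝ) ≤ p a := (hp a (Finset.mem_insert_self a t)).1.le
    have D1 := IH' k
    have D2 := IH' (k - 1)
    rw [show k - 1 - 1 = k - 2 by ring, show k - 1 + 1 = k by ring] at D2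
    have E := pb_four t p hpt IH' k
    nlinarith [mul_nonneg (mul_nonneg hq hq) (sub_nonneg.2 D1),
      mul_nonneg (mul_nonneg hP hP) (sub_nonneg.2 D2),
      mul_nonneg (mul_nonneg hq hP) (sub_nonneg.2 E)]

/-- Strict log-concavity of the Poisson–binomial for `1 ≤ k ≤ |s| - 1`. -/
lemma pb_strict (p : ι → ℝ) (s : Finset ι) (hp : ∀ i ∈ s, 0 < p i ∧ p i < 1) :
    ∀ k : ℤ, 1 ≤ k → k ≤ (s.card : ℤ) - 1 →
      pb s p (k - 1) * pb s p (k + 1) < pb s p k ^ 2 := by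
  induction s using Finset.induction_on with
  | empty => intro k hk1 hk2; simp at hk2; omega
  | insert a t ha IH =>
    have hpt : ∀ i ∈ t, 0 < p i ∧ p i < 1 := fun i hi => hp i (Finset.mem_insert_of_mem hi)
    intro k hk1 hk2
    rw [Finset.card_insert_of_notMem ha] at hk2
    push_cast at hk2
    have e1 := pb_insert ha p (k - 1)
    have e2 := pb_insert ha p k
    have e3 := pb_insert ha p (k + 1)
    rw [show k - 1 - 1 = k - 2 by ring] at e1
    rw [show k + 1 - 1 = k by ring] at e3
    rw [e1, e2, e3]
    have hpa := hp a (Finset.mem_insert_self a t)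
    have hq : (0:ℝ) < 1 - p a := by linarith [hpa.2]
    have hP : (0:ℝ) < p a := hpa.1
    have IH' := pb_weak p t hpt
    have D1 : pb t p (k - 1) * pb t p (k + 1) < pb t p k ^ 2 := by
      rcases lt_or_ge k (t.card : ℤ) with h | h
      · exact IH hpt k hk1 (by omega)
      · have hk : k = (t.card : ℤ) := by omega
        rw [pb_zero_of_gt t p (by omega : (t.card : ℤ) < k + 1), mul_zero]
        have := pb_pos t p hpt (k := k) (by omega) (by omega)
        positivity
    have D2 := IH' (k - 1)
    rw [show k - 1 - 1 = k - 2 by ring, show k - 1 + 1 = k by ring] at D2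
    have E := pb_four t p hpt IH' k
    nlinarith [mul_pos (mul_pos hq hq) (sub_pos.2 D1),
      mul_nonneg (mul_nonneg hP.le hP.le) (sub_nonneg.2 D2),
      mul_nonneg (mul_nonneg hq.le hP.le) (sub_nonneg.2 E)]

end PB

/-- `b(k,p)`: the probability that the sum of independent Bernoulli(`p i`)
random variables equals `k` (Poisson–binomial distribution), defined for all
integers `k` (it vanishes for `k < 0` or `k > n`). -/
noncomputable def pbin (n : ℕ) (p : Fin n → ℝ) (k : ℤ) : ℝ :=
  ∑ A ∈ Finset.univ.powerset.filter (fun A : Finset (Fin n) => (A.card : ℤ) = k),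
    (∏ i ∈ A, p i) * ∏ j ∈ Aᶜ, (1 - p j)

lemma pbin_eq_pb (n : ℕ) (p : Fin n → ℝ) (k : ℤ) : pbin n p k = pb Finset.univ p k := by
  unfold pbin pb
  apply Finset.sum_congr rfl
  intro A _
  rw [Finset.compl_eq_univ_sdiff]

/-- Strict log-concavity of the Poisson–binomial distribution. -/
theorem pbin_strict_log_concave (n : ℕ) (hn : 2 ≤ n) (p : Fin n → ℝ)
    (hp : ∀ i, 0 < p i ∧ p i < 1) (k : ℕ) (hk1 : 1 ≤ k) (hk2 : k ≤ n - 1) :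
    pbin n p ((k : ℤ) - 1) * pbin n p ((k : ℤ) + 1) < (pbin n p k) ^ 2 := by
  rw [pbin_eq_pb, pbin_eq_pb, pbin_eq_pb]
  apply pb_strict p Finset.univ (fun i _ => hp i) (k : ℤ) (by exact_mod_cast hk1)
  rw [Finset.card_univ, Fintype.card_fin]
  omega
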